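/- There exist ternary relations In, Eq, Sub on (k-forms) × (k-forms) × (abstract 2-configurations), independent of the underlying set of atoms, such that for all k-forms ψ, φ and all k-molecules τ, σ over any input structure: ψ * τ ∈ φ * σ iff In(ψ,φ,conf(τ,σ)); ψ * τ = φ * σ iff Eq(ψ,φ,conf(τ,σ)); and ψ * τ ⊆ φ * σ iff Sub(ψ,φ,conf(τ,σ)). -/
import Mathlib


open scoped Classical

/-- An abstract model of hereditarily finite sets over a set `A` of atoms,
together with the extension of permutations of atoms to all objects. -/
structure HFModel (A : Type) : Type 1 where
  Obj : Type
  atom : A → Obj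
  mkSet : Finset Obj → Obj
  members : Obj → Finset Obj
  act : Equiv.Perm A → Obj → Obj
  atom_injective : Function.Injective atom
  atom_ne_mkSet : ∀ a s, atom a ≠ mkSet s
  members_mkSet : ∀ s, members (mkSet s) = s
  members_atom : ∀ a, members (atom a) = ∅
  atom_or_set : ∀ x, (∃ a, x = atom a) ∨ (∃ s, x = mkSet s)
  act_atom : ∀ π a, act π (atom a) = atom (π a)
  act_mkSet : ∀ π s, act π (mkSet s) = mkSet (s.image (act π))
  act_one : ∀ x, act 1 x = x
  act_mul : ∀ π ρ x, act (π * ρ) x = act π (act ρ x)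

/-- Abstract 2-configurations for `k`-molecules with colours in `κ`. -/
structure Config2 (k : ℕ) (κ : Type) : Type where
  rel : Fin k → Fin k → Bool
  col₁ : Fin k → κ
  col₂ : Fin k → κ

/-- The configuration of a pair of `k`-molecules. -/
def conf {A κ : Type} [DecidableEq A] {k : ℕ} (col : A → κ) (τ σ : Fin k → A) :
    Config2 k κ :=
  ⟨fun p q => decide (τ p = σ q), col ∘ τ, col ∘ σ⟩

/-- `k`-forms. -/
inductive Form (k : ℕ) (κ : Type) : Type where
  | atom : Fin k → Form k κ
  | set : List (Form k κ × Config2 k κ) → Form k κ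

/-- Evaluation `φ * σ` of a `k`-form on a `k`-molecule. -/
noncomputable def evalForm {A κ : Type} [DecidableEq A] [Fintype A] {k : ℕ}
    (M : HFModel A) (col : A → κ) : (Fin k → A) → Form k κ → M.Obj
  | σ, .atom p => M.atom (σ p)
  | σ, .set l =>
      M.mkSet <| (l.attach.map (fun x =>
        (Finset.univ.filter
            (fun τ : Fin k → A => Function.Injective τ ∧ conf col τ σ = x.1.2)).image
          (fun τ => evalForm M col τ x.1.1))).foldr (· ∪ ·) ∅
  termination_by σ φ => sizeOf φ
  decreasing_by
    obtain ⟨⟨φ', E'⟩, hmem⟩ := x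
    have h := List.sizeOf_lt_of_mem hmem
    simp at h ⊢
    omega

/-- The orbit `G x` of an object under a finite set of permutations, as an object. -/
noncomputable def orbitObj {A : Type} (M : HFModel A) (G : Finset (Equiv.Perm A))
    (x : M.Obj) : M.Obj :=
  M.mkSet (G.image (fun g => M.act g x))

/-- The object `⋃_{h ∈ H} φ * (h ∘ σ)`. -/
noncomputable def unionEval {A κ : Type} [DecidableEq A] [Fintype A] {k : ℕ}
    (M : HFModel A) (col : A → κ) (H : Finset (Equiv.Perm A)) (φ : Form k κ)
    (σ : Fin k → A) : M.Obj :=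
  M.mkSet (H.biUnion (fun h => M.members (evalForm M col (⇑h ∘ σ) φ)))

/-- The orbit-form evaluation `(φ,G,H) * σ = G(⋃_{h∈H} φ * hσ)`. -/
noncomputable def orbitEval {A κ : Type} [DecidableEq A] [Fintype A] {k : ℕ}
    (M : HFModel A) (col : A → κ) (φ : Form k κ) (G H : Finset (Equiv.Perm A))
    (σ : Fin k → A) : M.Obj :=
  orbitObj M G (unionEval M col H φ σ)

/-- A finite set of permutations forming a subgroup. -/
def IsSubgroupF {A : Type} (G : Finset (Equiv.Perm A)) : Prop :=
  (1 : Equiv.Perm A) ∈ G ∧ (∀ g ∈ G, g⁻¹ ∈ G) ∧ ∀ g ∈ G, ∀ h ∈ G, g * h ∈ G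

/-- Colour-preserving permutations (automorphisms). -/
def IsAut {A κ : Type} (col : A → κ) (π : Equiv.Perm A) : Prop :=
  ∀ a, col (π a) = col a

/-- `X` is a support of object `x`. -/
def SupportsObj {A κ : Type} (M : HFModel A) (col : A → κ) (X : Set A) (x : M.Obj) : Prop :=
  ∀ π : Equiv.Perm A, IsAut col π → (∀ a ∈ X, π a = a) → M.act π x = x

/-- Transitive-closure membership. -/
inductive InTC {A : Type} (M : HFModel A) : M.Obj → M.Obj → Prop where
  | mem {x y} : x ∈ M.members y → InTC M x y
  | trans {x z y} : x ∈ M.members z → InTC M z y → InTC M x y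

/-- `y` is a transitive set. -/
def TransitiveObj {A : Type} (M : HFModel A) (y : M.Obj) : Prop :=
  ∀ z ∈ M.members y, ∀ w ∈ M.members z, w ∈ M.members y

/-- `x` is `k`-skew-symmetric. -/
def SkewSym {A κ : Type} (M : HFModel A) (col : A → κ) (k : ℕ) (x : M.Obj) : Prop :=
  ∃ (G : Finset (Equiv.Perm A)) (y : M.Obj), IsSubgroupF G ∧ x = orbitObj M G y ∧
    TransitiveObj M y ∧
    ∀ z, (z = y ∨ InTC M z y) →
      ∃ X : Finset A, X.card ≤ k ∧ SupportsObj M col X (orbitObj M G z)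

namespace FormRelAux

variable {κ : Type} {k : ℕ}

/-- Abstract 3-configurations. -/
structure Config3 (k : ℕ) (κ : Type) : Type where
  r01 : Fin k → Fin k → Bool
  r02 : Fin k → Fin k → Bool
  r12 : Fin k → Fin k → Bool
  c0 : Fin k → κ
  c1 : Fin k → κ
  c2 : Fin k → κ

def Config3.proj01 (Q : Config3 k κ) : Config2 k κ := ⟨Q.r01, Q.c0, Q.c1⟩
def Config3.proj02 (Q : Config3 k κ) : Config2 k κ := ⟨Q.r02, Q.c0, Q.c2⟩
def Config3.proj12 (Q : Config3 k κ) : Config2 k κ := ⟨Q.r12, Q.c1, Q.c2⟩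

/-- Combinatorial consistency of a 3-configuration. -/
structure Cons3 (Q : Config3 k κ) : Prop where
  col01 : ∀ p q, Q.r01 p q = true → Q.c0 p = Q.c1 q
  col02 : ∀ p r, Q.r02 p r = true → Q.c0 p = Q.c2 r
  col12 : ∀ q r, Q.r12 q r = true → Q.c1 q = Q.c2 r
  fun01 : ∀ p q q', Q.r01 p q = true → Q.r01 p q' = true → q = q'
  inj01 : ∀ p p' q, Q.r01 p q = true → Q.r01 p' q = true → p = p'
  fun02 : ∀ p r r', Q.r02 p r = true → Q.r02 p r' = true → r = r'
  inj02 : ∀ p p' r, Q.r02 p r = true → Q.r02 p' r = true → p = p'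
  fun12 : ∀ q r r', Q.r12 q r = true → Q.r12 q r' = true → r = r'
  inj12 : ∀ q q' r, Q.r12 q r = true → Q.r12 q' r = true → q = q'
  tr1 : ∀ p q r, Q.r01 p q = true → Q.r12 q r = true → Q.r02 p r = true
  tr2 : ∀ p q r, Q.r01 p q = true → Q.r02 p r = true → Q.r12 q r = true
  tr3 : ∀ p q r, Q.r02 p r = true → Q.r12 q r = true → Q.r01 p q = true

/-- The 3-configuration of a triple of molecules. -/
def conf3 {A : Type} [DecidableEq A] (col : A → κ) (τ0 τ1 τ2 : Fin k → A) :
    Config3 k κ :=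
  ⟨fun p q => decide (τ0 p = τ1 q), fun p r => decide (τ0 p = τ2 r),
   fun q r => decide (τ1 q = τ2 r), col ∘ τ0, col ∘ τ1, col ∘ τ2⟩

lemma cons3_conf3 {A : Type} [DecidableEq A] (col : A → κ) {τ0 τ1 τ2 : Fin k → A}
    (h0 : Function.Injective τ0) (h1 : Function.Injective τ1)
    (h2 : Function.Injective τ2) : Cons3 (conf3 col τ0 τ1 τ2) :=
  ⟨fun _ _ h => congrArg col (of_decide_eq_true h),
   fun _ _ h => congrArg col (of_decide_eq_true h),
   fun _ _ h => congrArg col (of_decide_eq_true h),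
   fun _ _ _ h h' => h1 ((of_decide_eq_true h).symm.trans (of_decide_eq_true h')),
   fun _ _ _ h h' => h0 ((of_decide_eq_true h).trans (of_decide_eq_true h').symm),
   fun _ _ _ h h' => h2 ((of_decide_eq_true h).symm.trans (of_decide_eq_true h')),
   fun _ _ _ h h' => h0 ((of_decide_eq_true h).trans (of_decide_eq_true h').symm),
   fun _ _ _ h h' => h2 ((of_decide_eq_true h).symm.trans (of_decide_eq_true h')),
   fun _ _ _ h h' => h1 ((of_decide_eq_true h).trans (of_decide_eq_true h').symm),
   fun _ _ _ h h' => decide_eq_true ((of_decide_eq_true h).trans (of_decide_eq_true h')),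
   fun _ _ _ h h' => decide_eq_true ((of_decide_eq_true h).symm.trans (of_decide_eq_true h')),
   fun _ _ _ h h' => decide_eq_true ((of_decide_eq_true h).trans (of_decide_eq_true h').symm)⟩

lemma decide_eq_iff (a : Prop) [Decidable a] (b : Bool) :
    (decide a = b) ↔ (a ↔ b = true) := by cases b <;> simp

/-- Unfolding equality of a configuration of molecules with an abstract one. -/
lemma conf_eq_iff {A : Type} [DecidableEq A] (col : A → κ) (τ σ : Fin k → A)
    (E : Config2 k κ) :
    conf col τ σ = E ↔ ((∀ p q, τ p = σ q ↔ E.rel p q = true) ∧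
      (∀ p, col (τ p) = E.col₁ p) ∧ (∀ q, col (σ q) = E.col₂ q)) := by
  cases E with
  | mk r c1 c2 =>
    simp only [conf, Config2.mk.injEq, funext_iff, Function.comp_apply,
      decide_eq_iff]

def Config2.swap (E : Config2 k κ) : Config2 k κ :=
  ⟨fun p q => E.rel q p, E.col₂, E.col₁⟩

lemma conf_swap {A : Type} [DecidableEq A] (col : A → κ) (τ σ : Fin k → A) :
    Config2.swap (conf col τ σ) = conf col σ τ := by
  simp only [conf, Config2.swap]
  congr 1
  funext p q
  simp [eq_comm]

/-- Choice of fresh atoms with prescribed colours, avoiding a forbidden set. -/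
lemma fresh_exists {A : Type} [DecidableEq A] [Fintype A] (col : A → κ)
    (hcard : ∀ c : κ, 3 * k ≤ (Finset.univ.filter (fun a : A => col a = c)).card)
    (B : Finset A) (hB : B.card ≤ 2 * k) (f : Fin k → κ) (dflt : Fin k → A)
    (S : Finset (Fin k)) :
    ∃ g : Fin k → A, (∀ p ∈ S, col (g p) = f p ∧ g p ∉ B) ∧
      (∀ p ∈ S, ∀ p' ∈ S, g p = g p' → p = p') := by
  classical
  induction S using Finset.induction_on with
  | empty =>
    refine ⟨dflt, ?_, ?_⟩ <;> intro p hp <;> exact absurd hp (Finset.notMem_empty p)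
  | @insert a S ha IH =>
    obtain ⟨g, hg1, hg2⟩ := IH
    have hne' : ∀ {p : Fin k}, p ∈ S → p ≠ a := fun hmem heq => ha (heq ▸ hmem)
    have hScard : S.card + 1 ≤ k := by
      have := Finset.card_le_univ (insert a S)
      rwa [Finset.card_insert_of_notMem ha, Fintype.card_fin] at this
    have hne : ((Finset.univ.filter (fun x : A => col x = f a)) \ (B ∪ S.image g)).Nonempty := by
      rw [← Finset.card_pos]
      have h1 := Finset.le_card_sdiff (B ∪ S.image g) (Finset.univ.filter (fun x : A => col x = f a))
      have h2 : (B ∪ S.image g).card ≤ B.card + S.card := by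
        refine le_trans (Finset.card_union_le _ _) ?_
        exact Nat.add_le_add_left (Finset.card_image_le) _
      have h3 := hcard (f a)
      omega
    obtain ⟨x, hx⟩ := hne
    rw [Finset.mem_sdiff, Finset.mem_filter, Finset.mem_union] at hx
    refine ⟨Function.update g a x, ?_, ?_⟩
    · intro p hp
      rcases Finset.mem_insert.1 hp with rfl | hp
      · rw [Function.update_self]
        exact ⟨hx.1.2, fun h => hx.2 (Or.inl h)⟩
      · rw [Function.update_of_ne (hne' hp)]
        exact hg1 p hp
    · intro p hp p' hp' hpp'
      rcases Finset.mem_insert.1 hp with rfl | hpS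
      · rcases Finset.mem_insert.1 hp' with rfl | hpS'
        · rfl
        · rw [Function.update_self, Function.update_of_ne (hne' hpS')] at hpp'
          exact absurd (Or.inr (Finset.mem_image.2 ⟨p', hpS', hpp'.symm⟩)) hx.2
      · rcases Finset.mem_insert.1 hp' with rfl | hpS'
        · rw [Function.update_self, Function.update_of_ne (hne' hpS)] at hpp'
          exact absurd (Or.inr (Finset.mem_image.2 ⟨p, hpS, hpp'⟩)) hx.2
        · rw [Function.update_of_ne (hne' hpS), Function.update_of_ne (hne' hpS')] at hpp'
          exact hg2 p hpS p' hpS' hpp'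

/-- The configuration extension lemma. -/
lemma extension {A : Type} [DecidableEq A] [Fintype A] (col : A → κ)
    (hcard : ∀ c : κ, 3 * k ≤ (Finset.univ.filter (fun a : A => col a = c)).card)
    (Q : Config3 k κ) (hQ : Cons3 Q) (τ σ : Fin k → A)
    (hτ : Function.Injective τ) (hσ : Function.Injective σ)
    (h12 : conf col τ σ = Q.proj12) :
    ∃ τ' : Fin k → A, Function.Injective τ' ∧ conf col τ' τ = Q.proj01 ∧
      conf col τ' σ = Q.proj02 := by
  classical
  obtain ⟨hrel12, hc1, hc2⟩ := (conf_eq_iff col τ σ Q.proj12).1 h12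
  have hB : ((Finset.univ.image τ) ∪ (Finset.univ.image σ)).card ≤ 2 * k := by
    refine le_trans (Finset.card_union_le _ _) ?_
    have h1 : (Finset.univ.image τ).card ≤ k := by
      refine le_trans Finset.card_image_le ?_
      simp
    have h2 : (Finset.univ.image σ).card ≤ k := by
      refine le_trans Finset.card_image_le ?_
      simp
    omega
  obtain ⟨g, hg1, hg2⟩ := fresh_exists col hcard _ hB Q.c0 τ
    (Finset.univ.filter (fun p =>
      (¬ ∃ q, Q.r01 p q = true) ∧ (¬ ∃ r, Q.r02 p r = true)))
  set τ' : Fin k → A := fun p =>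
    if h1 : ∃ q, Q.r01 p q = true then τ h1.choose
    else if h2 : ∃ r, Q.r02 p r = true then σ h2.choose
    else g p with hτ'def
  have hfreeB : ∀ p, (¬ ∃ q, Q.r01 p q = true) → (¬ ∃ r, Q.r02 p r = true) →
      col (g p) = Q.c0 p ∧ g p ∉ (Finset.univ.image τ) ∪ (Finset.univ.image σ) :=
    fun p h1 h2 => hg1 p (Finset.mem_filter.2 ⟨Finset.mem_univ _, h1, h2⟩)
  have ha : ∀ p q, τ' p = τ q ↔ Q.r01 p q = true := by
    intro p q
    by_cases h1 : ∃ q0, Q.r01 p q0 = true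
    · simp only [hτ'def, dif_pos h1]
      constructor
      · intro h
        have hs := h1.choose_spec
        rwa [hτ h] at hs
      · intro h
        rw [hQ.fun01 p _ q h1.choose_spec h]
    · by_cases h2 : ∃ r0, Q.r02 p r0 = true
      · simp only [hτ'def, dif_pos h2, dif_neg h1]
        constructor
        · intro h
          have : τ q = σ h2.choose := h.symm
          have hr12 := (hrel12 q h2.choose).1 this
          exact absurd ⟨q, hQ.tr3 p q h2.choose h2.choose_spec hr12⟩ h1
        · intro h; exact absurd ⟨q, h⟩ h1
      · simp only [hτ'def, dif_neg h1, dif_neg h2]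
        constructor
        · intro h
          exact absurd (Finset.mem_union_left _ (Finset.mem_image.2 ⟨q, Finset.mem_univ _, h.symm⟩))
            (hfreeB p h1 h2).2
        · intro h; exact absurd ⟨q, h⟩ h1
  have ha' : ∀ p r, τ' p = σ r ↔ Q.r02 p r = true := by
    intro p r
    by_cases h1 : ∃ q0, Q.r01 p q0 = true
    · simp only [hτ'def, dif_pos h1]
      have hq0 := h1.choose_spec
      constructor
      · intro h
        exact hQ.tr1 p _ r hq0 ((hrel12 _ r).1 h)
      · intro h
        exact (hrel12 _ r).2 (hQ.tr2 p _ r hq0 h)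
    · by_cases h2 : ∃ r0, Q.r02 p r0 = true
      · simp only [hτ'def, dif_pos h2, dif_neg h1]
        have hr0 := h2.choose_spec
        constructor
        · intro h
          rw [← hσ h]
          exact hr0
        · intro h
          rw [hQ.fun02 p _ r hr0 h]
      · simp only [hτ'def, dif_neg h1, dif_neg h2]
        constructor
        · intro h
          exact absurd (Finset.mem_union_right _ (Finset.mem_image.2 ⟨r, Finset.mem_univ _, h.symm⟩))
            (hfreeB p h1 h2).2
        · intro h; exact absurd ⟨r, h⟩ h2
  have hcol : ∀ p, col (τ' p) = Q.c0 p := by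
    intro p
    by_cases h1 : ∃ q0, Q.r01 p q0 = true
    · simp only [hτ'def, dif_pos h1]
      rw [hc1]
      exact (hQ.col01 p _ h1.choose_spec).symm
    · by_cases h2 : ∃ r0, Q.r02 p r0 = true
      · simp only [hτ'def, dif_pos h2, dif_neg h1]
        rw [hc2]
        exact (hQ.col02 p _ h2.choose_spec).symm
      · simp only [hτ'def, dif_neg h1, dif_neg h2]
        exact (hfreeB p h1 h2).1
  have hinj : Function.Injective τ' := by
    intro p p' h
    by_cases h1' : ∃ q0, Q.r01 p' q0 = true
    · have : τ' p' = τ h1'.choose := by simp only [hτ'def, dif_pos h1']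
      have hp := (ha p h1'.choose).1 (h.trans this)
      exact hQ.inj01 p p' _ hp h1'.choose_spec
    · by_cases h2' : ∃ r0, Q.r02 p' r0 = true
      · have : τ' p' = σ h2'.choose := by simp only [hτ'def, dif_pos h2', dif_neg h1']
        have hp := (ha' p h2'.choose).1 (h.trans this)
        exact hQ.inj02 p p' _ hp h2'.choose_spec
      · have hp'g : τ' p' = g p' := by simp only [hτ'def, dif_neg h1', dif_neg h2']
        by_cases h1 : ∃ q0, Q.r01 p q0 = true
        · have : τ' p = τ h1.choose := by simp only [hτ'def, dif_pos h1]
          exact absurd (Finset.mem_union_left _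
            (Finset.mem_image.2 ⟨h1.choose, Finset.mem_univ _, (this.symm.trans h).trans hp'g⟩))
            (hfreeB p' h1' h2').2
        · by_cases h2 : ∃ r0, Q.r02 p r0 = true
          · have : τ' p = σ h2.choose := by simp only [hτ'def, dif_pos h2, dif_neg h1]
            exact absurd (Finset.mem_union_right _
              (Finset.mem_image.2 ⟨h2.choose, Finset.mem_univ _, (this.symm.trans h).trans hp'g⟩))
              (hfreeB p' h1' h2').2
          · have hpg : τ' p = g p := by simp only [hτ'def, dif_neg h1, dif_neg h2]
            exact hg2 p (Finset.mem_filter.2 ⟨Finset.mem_univ _, h1, h2⟩)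
              p' (Finset.mem_filter.2 ⟨Finset.mem_univ _, h1', h2'⟩)
              ((hpg.symm.trans h).trans hp'g)
  refine ⟨τ', hinj, ?_, ?_⟩
  · rw [conf_eq_iff]
    exact ⟨ha, hcol, hc1⟩
  · rw [conf_eq_iff]
    exact ⟨ha', hcol, hc2⟩

/-- The syntactic relations, by simultaneous recursion on the ranks of the forms.
Tag 0 is `In`, tag 1 is `Sub`, tag 2 is `Eq`. -/
def RelAux : ℕ → Form k κ → Form k κ → Config2 k κ → Prop
  | 0, _, .atom _, _ => False
  | 0, ψ, .set m, E => ∃ x, ∃ _ : x ∈ m, ∃ Q : Config3 k κ,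
      Cons3 Q ∧ Q.proj12 = E ∧ Q.proj02 = x.2 ∧ RelAux 2 x.1 ψ Q.proj01
  | 1, .atom _, _, _ => True
  | 1, .set l, φ, E => ∀ x, ∀ _ : x ∈ l, ∀ Q : Config3 k κ,
      Cons3 Q → Q.proj12 = E → Q.proj01 = x.2 → RelAux 0 x.1 φ Q.proj02
  | 2, .atom p, .atom q, E => E.rel p q = true
  | 2, .atom _, .set _, _ => False
  | 2, .set _, .atom _, _ => False
  | 2, .set l, .set m, E =>
      RelAux 1 (.set l) (.set m) E ∧ RelAux 1 (.set m) (.set l) (Config2.swap E)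
  | _+3, _, _, _ => False
termination_by t ψ φ _ => (sizeOf ψ + sizeOf φ, t)
decreasing_by
  · obtain ⟨χ, D⟩ := x
    have h := List.sizeOf_lt_of_mem ‹(χ, D) ∈ m›
    simp at h ⊢
    apply Prod.Lex.left
    omega
  · obtain ⟨χ, D⟩ := x
    have h := List.sizeOf_lt_of_mem ‹(χ, D) ∈ l›
    simp at h ⊢
    apply Prod.Lex.left
    omega
  · apply Prod.Lex.right
    omega
  · rw [Nat.add_comm]
    apply Prod.Lex.right
    omega

lemma mem_foldr_union {α : Type} [DecidableEq α] (L : List (Finset α)) (x : α) :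
    x ∈ L.foldr (· ∪ ·) ∅ ↔ ∃ s ∈ L, x ∈ s := by
  induction L with
  | nil => simp
  | cons a L ih => simp [ih]

lemma eval_atom {A : Type} [DecidableEq A] [Fintype A] (M : HFModel A)
    (col : A → κ) (σ : Fin k → A) (p : Fin k) :
    evalForm M col σ (.atom p) = M.atom (σ p) := by
  rw [evalForm]

lemma eval_set_is_mkSet {A : Type} [DecidableEq A] [Fintype A] (M : HFModel A)
    (col : A → κ) (σ : Fin k → A) (l : List (Form k κ × Config2 k κ)) :
    ∃ s, evalForm M col σ (.set l) = M.mkSet s := by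
  rw [evalForm]
  exact ⟨_, rfl⟩

lemma mem_members_eval_set {A : Type} [DecidableEq A] [Fintype A] (M : HFModel A)
    (col : A → κ) (σ : Fin k → A) (l : List (Form k κ × Config2 k κ)) (x : M.Obj) :
    x ∈ M.members (evalForm M col σ (.set l)) ↔
      ∃ y ∈ l, ∃ τ' : Fin k → A, Function.Injective τ' ∧ conf col τ' σ = y.2 ∧
        x = evalForm M col τ' y.1 := by
  rw [evalForm, M.members_mkSet, mem_foldr_union]
  constructor
  · rintro ⟨s, hs, hx⟩
    rw [List.mem_map] at hs
    obtain ⟨⟨y, hy⟩, -, rfl⟩ := hs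
    rw [Finset.mem_image] at hx
    obtain ⟨τ', hτ', rfl⟩ := hx
    rw [Finset.mem_filter] at hτ'
    exact ⟨y, hy, τ', hτ'.2.1, hτ'.2.2, rfl⟩
  · rintro ⟨y, hy, τ', h1, h2, rfl⟩
    refine ⟨_, List.mem_map.2 ⟨⟨y, hy⟩, List.mem_attach _ _, rfl⟩, ?_⟩
    exact Finset.mem_image.2 ⟨τ', Finset.mem_filter.2 ⟨Finset.mem_univ _, h1, h2⟩, rfl⟩

lemma RelAux_in_atom (ψ : Form k κ) (q : Fin k) (E : Config2 k κ) :
    RelAux 0 ψ (.atom q) E = False := by rw [RelAux]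

lemma RelAux_in_set (ψ : Form k κ) (m : List (Form k κ × Config2 k κ)) (E : Config2 k κ) :
    RelAux 0 ψ (.set m) E = ∃ x, ∃ _ : x ∈ m, ∃ Q : Config3 k κ,
      Cons3 Q ∧ Q.proj12 = E ∧ Q.proj02 = x.2 ∧ RelAux 2 x.1 ψ Q.proj01 := by
  rw [RelAux]

lemma RelAux_sub_atom (p : Fin k) (φ : Form k κ) (E : Config2 k κ) :
    RelAux 1 (.atom p) φ E = True := by rw [RelAux]

lemma RelAux_sub_set (l : List (Form k κ × Config2 k κ)) (φ : Form k κ) (E : Config2 k κ) :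
    RelAux 1 (.set l) φ E = ∀ x, ∀ _ : x ∈ l, ∀ Q : Config3 k κ,
      Cons3 Q → Q.proj12 = E → Q.proj01 = x.2 → RelAux 0 x.1 φ Q.proj02 := by
  rw [RelAux]

lemma RelAux_eq_atom_atom (p q : Fin k) (E : Config2 k κ) :
    RelAux 2 (Form.atom p) (Form.atom q) E = (E.rel p q = true) := by rw [RelAux]

lemma RelAux_eq_atom_set (p : Fin k) (m : List (Form k κ × Config2 k κ)) (E : Config2 k κ) :
    RelAux 2 (Form.atom p) (.set m) E = False := by rw [RelAux]

lemma RelAux_eq_set_atom (l : List (Form k κ × Config2 k κ)) (q : Fin k) (E : Config2 k κ) :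
    RelAux 2 (.set l) (Form.atom q) E = False := by rw [RelAux]

lemma RelAux_eq_set_set (l m : List (Form k κ × Config2 k κ)) (E : Config2 k κ) :
    RelAux 2 (.set l) (.set m) E =
      (RelAux 1 (.set l) (.set m) E ∧ RelAux 1 (.set m) (.set l) (Config2.swap E)) := by
  conv_lhs => rw [RelAux]

/-- The main characterisation, by strong induction on the total size of the forms. -/
lemma main {A : Type} [DecidableEq A] [Fintype A] (M : HFModel A) (col : A → κ)
    (hcard : ∀ c : κ, 3 * k ≤ (Finset.univ.filter (fun a : A => col a = c)).card) :
    ∀ n : ℕ, ∀ ψ φ : Form k κ, sizeOf ψ + sizeOf φ = n →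
      ∀ τ σ : Fin k → A, Function.Injective τ → Function.Injective σ →
        ((evalForm M col τ ψ ∈ M.members (evalForm M col σ φ)) ↔
          RelAux 0 ψ φ (conf col τ σ)) ∧
        ((M.members (evalForm M col τ ψ) ⊆ M.members (evalForm M col σ φ)) ↔
          RelAux 1 ψ φ (conf col τ σ)) ∧
        ((evalForm M col τ ψ = evalForm M col σ φ) ↔
          RelAux 2 ψ φ (conf col τ σ)) := by
  intro n
  induction n using Nat.strong_induction_on with
  | _ n IH =>
  have hIn : ∀ ψ φ : Form k κ, sizeOf ψ + sizeOf φ = n →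
      ∀ τ σ : Fin k → A, Function.Injective τ → Function.Injective σ →
      ((evalForm M col τ ψ ∈ M.members (evalForm M col σ φ)) ↔
        RelAux 0 ψ φ (conf col τ σ)) := by
    intro ψ φ hn τ σ hτ hσ
    cases φ with
    | atom q =>
      rw [eval_atom, M.members_atom, RelAux_in_atom]
      simp
    | set m =>
      rw [mem_members_eval_set, RelAux_in_set]
      constructor
      · rintro ⟨⟨χ, D⟩, hy, τ', hinj', hconf', heq⟩
        have hsz : sizeOf χ + sizeOf ψ < n := by
          rw [← hn]
          have h := List.sizeOf_lt_of_mem hy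
          simp at h ⊢
          omega
        refine ⟨(χ, D), hy, conf3 col τ' τ σ, cons3_conf3 col hinj' hτ hσ, rfl, hconf', ?_⟩
        exact ((IH _ hsz χ ψ rfl τ' τ hinj' hτ).2.2).1 heq.symm
      · rintro ⟨⟨χ, D⟩, hy, Q, hQ, h12, h02, hrel⟩
        obtain ⟨τ', hinj', h01, h02'⟩ := extension col hcard Q hQ τ σ hτ hσ h12.symm
        have hsz : sizeOf χ + sizeOf ψ < n := by
          rw [← hn]
          have h := List.sizeOf_lt_of_mem hy
          simp at h ⊢
          omega
        refine ⟨(χ, D), hy, τ', hinj', by rw [h02', h02], ?_⟩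
        refine (((IH _ hsz χ ψ rfl τ' τ hinj' hτ).2.2).2 ?_).symm
        rw [h01]
        exact hrel
  have hSub : ∀ ψ φ : Form k κ, sizeOf ψ + sizeOf φ = n →
      ∀ τ σ : Fin k → A, Function.Injective τ → Function.Injective σ →
      ((M.members (evalForm M col τ ψ) ⊆ M.members (evalForm M col σ φ)) ↔
        RelAux 1 ψ φ (conf col τ σ)) := by
    intro ψ φ hn τ σ hτ hσ
    cases ψ with
    | atom p =>
      rw [eval_atom, M.members_atom, RelAux_sub_atom]
      simp [Finset.empty_subset]
    | set l =>
      rw [RelAux_sub_set]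
      constructor
      · intro hss x hx Q hQ h12 h01
        obtain ⟨χ, D⟩ := x
        obtain ⟨τ', hinj', h01', h02'⟩ := extension col hcard Q hQ τ σ hτ hσ h12.symm
        have hsz : sizeOf χ + sizeOf φ < n := by
          rw [← hn]
          have h := List.sizeOf_lt_of_mem hx
          simp at h ⊢
          omega
        have hmem : evalForm M col τ' χ ∈ M.members (evalForm M col σ φ) := by
          refine hss ?_
          rw [mem_members_eval_set]
          exact ⟨(χ, D), hx, τ', hinj', h01'.trans h01, rfl⟩
        have := ((IH _ hsz χ φ rfl τ' σ hinj' hσ).1).1 hmem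
        rwa [h02'] at this
      · intro hrel x hxmem
        rw [mem_members_eval_set] at hxmem
        obtain ⟨⟨χ, D⟩, hy, τ', hinj', hconf', rfl⟩ := hxmem
        have hsz : sizeOf χ + sizeOf φ < n := by
          rw [← hn]
          have h := List.sizeOf_lt_of_mem hy
          simp at h ⊢
          omega
        have := hrel (χ, D) hy (conf3 col τ' τ σ) (cons3_conf3 col hinj' hτ hσ) rfl hconf'
        exact ((IH _ hsz χ φ rfl τ' σ hinj' hσ).1).2 this
  have hEq : ∀ ψ φ : Form k κ, sizeOf ψ + sizeOf φ = n →
      ∀ τ σ : Fin k → A, Function.Injective τ → Function.Injective σ →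
      ((evalForm M col τ ψ = evalForm M col σ φ) ↔
        RelAux 2 ψ φ (conf col τ σ)) := by
    intro ψ φ hn τ σ hτ hσ
    cases ψ with
    | atom p =>
      cases φ with
      | atom q =>
        rw [eval_atom, eval_atom, RelAux_eq_atom_atom]
        constructor
        · intro h
          exact decide_eq_true (M.atom_injective h)
        · intro h
          exact congrArg M.atom (of_decide_eq_true h)
      | set m =>
        obtain ⟨s, hs⟩ := eval_set_is_mkSet M col σ m
        rw [eval_atom, hs, RelAux_eq_atom_set]
        constructor
        · intro h
          exact M.atom_ne_mkSet _ _ h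
        · exact False.elim
    | set l =>
      cases φ with
      | atom q =>
        obtain ⟨s, hs⟩ := eval_set_is_mkSet M col τ l
        rw [eval_atom, hs, RelAux_eq_set_atom]
        constructor
        · intro h
          exact M.atom_ne_mkSet _ _ h.symm
        · exact False.elim
      | set m =>
        rw [RelAux_eq_set_set]
        have h1 := hSub (.set l) (.set m) hn τ σ hτ hσ
        have h2 := hSub (.set m) (.set l) (by omega) σ τ hσ hτ
        rw [← conf_swap] at h2
        obtain ⟨s, hs⟩ := eval_set_is_mkSet M col τ l
        obtain ⟨t, ht⟩ := eval_set_is_mkSet M col σ m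
        constructor
        · intro h
          exact ⟨h1.1 (by rw [h]), h2.1 (by rw [h])⟩
        · rintro ⟨ha, hb⟩
          have hmem : M.members (evalForm M col τ (.set l)) =
              M.members (evalForm M col σ (.set m)) :=
            Finset.Subset.antisymm (h1.2 ha) (h2.2 hb)
          rw [hs, ht] at hmem ⊢
          rw [M.members_mkSet, M.members_mkSet] at hmem
          rw [hmem]
  exact fun ψ φ hn τ σ hτ hσ => ⟨hIn ψ φ hn τ σ hτ hσ, hSub ψ φ hn τ σ hτ hσ, hEq ψ φ hn τ σ hτ hσ⟩


end FormRelAux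

/-- There are ternary relations `In`, `Eq`, `Sub` on forms and configurations,
independent of the underlying set of atoms, characterising membership, equality
and inclusion of evaluated forms. -/
theorem relations_over_forms_and_configurations {κ : Type} (k : ℕ) :
    ∃ (In Eq' Sub : Form k κ → Form k κ → Config2 k κ → Prop),
      ∀ (A : Type) [DecidableEq A] [Fintype A],
        ∀ (M : HFModel A) (col : A → κ),
          (∀ c : κ, 3 * k ≤ (Finset.univ.filter (fun a : A => col a = c)).card) →
          ∀ (ψ φ : Form k κ) (τ σ : Fin k → A),
            Function.Injective τ → Function.Injective σ →
            ((evalForm M col τ ψ ∈ M.members (evalForm M col σ φ)) ↔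
              In ψ φ (conf col τ σ)) ∧
            ((evalForm M col τ ψ = evalForm M col σ φ) ↔ Eq' ψ φ (conf col τ σ)) ∧
            ((M.members (evalForm M col τ ψ) ⊆ M.members (evalForm M col σ φ)) ↔
              Sub ψ φ (conf col τ σ)) := by
  classical
  refine ⟨FormRelAux.RelAux 0, FormRelAux.RelAux 2, FormRelAux.RelAux 1, ?_⟩
  intro A _ _ M col hcard ψ φ τ σ hτ hσ
  obtain ⟨h0, h1, h2⟩ :=
    FormRelAux.main M col hcard (sizeOf ψ + sizeOf φ) ψ φ rfl τ σ hτ hσ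
  exact ⟨h0, h2, h1⟩
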